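/- arXiv:1705.05792 — 4 statements merged into one kernel-verified Lean document; each statement's English description precedes it below -/
import Mathlib

section
/- There exist a constant C and a real number δ with 0 < δ < 1 such that for every A ∈ ℕ, ∫_{[0,1)²} sup_{n ≤ 2^A} |(1/2^A) Σ_{k=0}^{2^A−1} ω_k(x¹) ω_{k+n}(x²)| d(x¹,x²) ≤ C δ^A. -/
open MeasureTheory

/-- The `j`-th binary digit of `x ∈ [0,1)`, using the expansion terminating in zeros. -/
noncomputable def dig (x : ℝ) (j : ℕ) : ℕ := (⌊x * 2 ^ (j + 1)⌋).toNat % 2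

/-- The Walsh–Paley function `ω_n(x) = (−1)^{Σ_j n_j x_j}`. -/
noncomputable def walsh (n : ℕ) (x : ℝ) : ℝ :=
  (-1 : ℝ) ^ (∑ j ∈ Finset.range (n + 1), (n.testBit j).toNat * dig x j)

/-- auxiliary character: `(-1)^{Σ_{j<N} n_j d_j}` -/
noncomputable def W (N n : ℕ) (d : ℕ → ℕ) : ℝ :=
  (-1 : ℝ) ^ (∑ j ∈ Finset.range N, (n.testBit j).toNat * d j)

lemma walsh_eq_W (n : ℕ) (x : ℝ) : walsh n x = W (n + 1) n (dig x) := rfl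

lemma W_abs (N n : ℕ) (d : ℕ → ℕ) : |W N n d| = 1 := by
  rw [W, abs_pow, abs_neg, abs_one, one_pow]

lemma W_succ (N n : ℕ) (d : ℕ → ℕ) (h : n < 2 ^ N) : W (N + 1) n d = W N n d := by
  rw [W, W, Finset.sum_range_succ, Nat.testBit_eq_false_of_lt h]
  simp

lemma W_add (N t n : ℕ) (d : ℕ → ℕ) (h : n < 2 ^ N) : W (N + t) n d = W N n d := by
  induction t with
  | zero => rfl
  | succ t ih =>
    rw [← Nat.add_assoc, W_succ _ _ _ (lt_of_lt_of_le h (Nat.pow_le_pow_right (by norm_num) (Nat.le_add_right _ _))), ih]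

lemma W_stable {N M n : ℕ} (d : ℕ → ℕ) (hN : n < 2 ^ N) (hM : n < 2 ^ M) :
    W N n d = W M n d := by
  rcases le_total N M with h | h
  · rw [← W_add N (M - N) n d hN, Nat.add_sub_cancel' h]
  · rw [← W_add M (N - M) n d hM, Nat.add_sub_cancel' h]

lemma W_even (N k : ℕ) (d : ℕ → ℕ) :
    W (N + 1) (2 * k) d = W N k (fun j => d (j + 1)) := by
  rw [W, W, Finset.sum_range_succ']
  have h0 : ((2 * k).testBit 0) = false := by
    simp [Nat.testBit_eq_decide_div_mod_eq, Nat.mul_mod_right]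
  have h1 : ∀ j, ((2 * k).testBit (j + 1)) = k.testBit j := by
    intro j
    rw [Nat.testBit_succ]
    congr 1
    omega
  simp [h0, h1]

lemma W_odd (N k : ℕ) (d : ℕ → ℕ) :
    W (N + 1) (2 * k + 1) d = (-1 : ℝ) ^ (d 0) * W N k (fun j => d (j + 1)) := by
  rw [W, W, Finset.sum_range_succ']
  have h0 : ((2 * k + 1).testBit 0) = true := by
    simp [Nat.testBit_eq_decide_div_mod_eq, Nat.mul_add_mod]
  have h1 : ∀ j, ((2 * k + 1).testBit (j + 1)) = k.testBit j := by
    intro j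
    rw [Nat.testBit_succ]
    congr 1
    omega
  simp only [h0, h1, Bool.toNat_true, one_mul]
  rw [pow_add, mul_comm]

/-- partial correlation sums -/
noncomputable def T (A n : ℕ) (d e : ℕ → ℕ) : ℝ :=
  ∑ k ∈ Finset.range (2 ^ A), W A k d * W (A + 1) (k + n) e

lemma sum_range_two_mul (f : ℕ → ℝ) (N : ℕ) :
    ∑ k ∈ Finset.range (2 * N), f k = ∑ k ∈ Finset.range N, (f (2 * k) + f (2 * k + 1)) := by
  induction N with
  | zero => simp
  | succ N ih =>
    have h : 2 * (N + 1) = (2 * N + 1) + 1 := by ring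
    rw [h, Finset.sum_range_succ, Finset.sum_range_succ, ih, Finset.sum_range_succ]
    ring

lemma T_zero_abs (n : ℕ) (d e : ℕ → ℕ) : |T 0 n d e| = 1 := by
  rw [T]
  simp only [pow_zero, Finset.range_one, Finset.sum_singleton, Nat.zero_add]
  have : W 0 0 d = 1 := by rw [W]; simp
  rw [this, one_mul, W_abs]

lemma T_even (A m : ℕ) (d e : ℕ → ℕ) :
    T (A + 1) (2 * m) d e
      = (1 + (-1 : ℝ) ^ (d 0 + e 0)) * T A m (fun j => d (j + 1)) (fun j => e (j + 1)) := by
  rw [T, T, pow_succ, mul_comm (2 ^ A) 2, sum_range_two_mul, Finset.mul_sum]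
  refine Finset.sum_congr rfl fun k _ => ?_
  have e1 : 2 * k + 2 * m = 2 * (k + m) := by ring
  have e2 : 2 * k + 1 + 2 * m = 2 * (k + m) + 1 := by ring
  rw [e1, e2, W_even A k d, W_odd A k d, W_even (A + 1) (k + m) e, W_odd (A + 1) (k + m) e,
    pow_add]
  ring

lemma T_odd (A m : ℕ) (d e : ℕ → ℕ) :
    T (A + 1) (2 * m + 1) d e
      = (-1 : ℝ) ^ (e 0) * T A m (fun j => d (j + 1)) (fun j => e (j + 1))
        + (-1 : ℝ) ^ (d 0) * T A (m + 1) (fun j => d (j + 1)) (fun j => e (j + 1)) := by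
  rw [T, T, T, pow_succ, mul_comm (2 ^ A) 2, sum_range_two_mul, Finset.mul_sum, Finset.mul_sum,
    ← Finset.sum_add_distrib]
  refine Finset.sum_congr rfl fun k _ => ?_
  have e1 : 2 * k + (2 * m + 1) = 2 * (k + m) + 1 := by ring
  have e2 : 2 * k + 1 + (2 * m + 1) = 2 * (k + (m + 1)) := by ring
  rw [e1, e2, W_even A k d, W_odd A k d, W_even (A + 1) (k + (m + 1)) e,
    W_odd (A + 1) (k + m) e]
  ring

/-- the recursive bound pair `(M, P)` -/
noncomputable def MP : ℕ → (ℕ → ℕ) → (ℕ → ℕ) → ℝ × ℝ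
  | 0, _, _ => (1, 1)
  | A + 1, d, e =>
    let q := MP A (fun j => d (j + 1)) (fun j => e (j + 1))
    if Even (d 0 + e 0) then (q.1, (q.1 + q.2) / 2) else (q.2, q.2 / 2)

lemma MP_pos : ∀ (A : ℕ) (d e : ℕ → ℕ), 0 < (MP A d e).2 ∧ (MP A d e).2 ≤ (MP A d e).1 := by
  intro A
  induction A with
  | zero => intro d e; simp [MP]
  | succ A ih =>
    intro d e
    obtain ⟨h1, h2⟩ := ih (fun j => d (j + 1)) (fun j => e (j + 1))
    rw [MP]
    by_cases h : Even (d 0 + e 0)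
    · rw [if_pos h]; constructor <;> simp <;> linarith
    · rw [if_neg h]; constructor <;> simp <;> linarith

lemma MP_congr : ∀ (A : ℕ) (d e d' e' : ℕ → ℕ),
    (∀ j < A, (Even (d j + e j) ↔ Even (d' j + e' j))) → MP A d e = MP A d' e' := by
  intro A
  induction A with
  | zero => intro _ _ _ _ _; rfl
  | succ A ih =>
    intro d e d' e' h
    rw [MP, MP, ih (fun j => d (j + 1)) (fun j => e (j + 1)) (fun j => d' (j + 1))
      (fun j => e' (j + 1)) (fun j hj => h (j + 1) (by omega))]
    have h0 := h 0 (by omega)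
    by_cases hc : Even (d 0 + e 0)
    · rw [if_pos hc, if_pos (h0.mp hc)]
    · rw [if_neg hc, if_neg (fun hh => hc (h0.mpr hh))]

lemma neg_one_pow_add_eq (a b : ℕ) (h : Even (a + b)) :
    (1 : ℝ) + (-1) ^ (a + b) = 2 := by
  rw [h.neg_one_pow]; norm_num

lemma neg_one_pow_add_eq' (a b : ℕ) (h : ¬ Even (a + b)) :
    (1 : ℝ) + (-1) ^ (a + b) = 0 := by
  rw [(Nat.not_even_iff_odd.mp h).neg_one_pow]; norm_num

lemma T_bound : ∀ (A : ℕ) (d e : ℕ → ℕ),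
    (∀ n ≤ 2 ^ A, |T A n d e| ≤ 2 ^ A * (MP A d e).1) ∧
    (∀ m, m + 1 ≤ 2 ^ A → |T A m d e| + |T A (m + 1) d e| ≤ 2 ^ (A + 1) * (MP A d e).2) := by
  intro A
  induction A with
  | zero =>
    intro d e
    constructor
    · intro n _; rw [T_zero_abs]; simp [MP]
    · intro m _; rw [T_zero_abs, T_zero_abs]; simp [MP]; norm_num
  | succ A ih =>
    intro d e
    obtain ⟨ih1, ih2⟩ := ih (fun j => d (j + 1)) (fun j => e (j + 1))
    obtain ⟨hP0, hPM⟩ := MP_pos A (fun j => d (j + 1)) (fun j => e (j + 1))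
    set M' := (MP A (fun j => d (j + 1)) (fun j => e (j + 1))).1 with hM'
    set P' := (MP A (fun j => d (j + 1)) (fun j => e (j + 1))).2 with hP'
    have hpow : (2 : ℝ) ^ (A + 1) = 2 * 2 ^ A := by ring
    have hnpow : (2 : ℕ) ^ (A + 1) = 2 * 2 ^ A := by ring
    have hMP1 : (MP (A + 1) d e).1 = if Even (d 0 + e 0) then M' else P' := by
      rw [MP]; by_cases h : Even (d 0 + e 0) <;> simp [h, hM', hP']
    have hMP2 : (MP (A + 1) d e).2
        = if Even (d 0 + e 0) then (M' + P') / 2 else P' / 2 := by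
      rw [MP]; by_cases h : Even (d 0 + e 0) <;> simp [h, hM', hP']
    constructor
    · intro n hn
      rcases Nat.even_or_odd n with ⟨m, hm⟩ | ⟨m, hm⟩
      · -- n = 2m
        have hm' : n = 2 * m := by omega
        have hmle : m ≤ 2 ^ A := by omega
        rw [hm', T_even, abs_mul]
        by_cases h : Even (d 0 + e 0)
        · rw [neg_one_pow_add_eq _ _ h, hMP1, if_pos h]
          have := ih1 m hmle
          rw [abs_two, hpow]
          nlinarith [abs_nonneg (T A m (fun j => d (j + 1)) (fun j => e (j + 1)))]
        · rw [neg_one_pow_add_eq' _ _ h, hMP1, if_neg h, abs_zero, zero_mul]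
          positivity
      · -- n = 2m+1
        have hmle : m + 1 ≤ 2 ^ A := by omega
        have ht := ih2 m hmle
        have htr : |T (A + 1) n d e| ≤ 2 ^ (A + 1) * P' := by
          rw [hm, T_odd]
          calc |(-1 : ℝ) ^ (e 0) * T A m (fun j => d (j + 1)) (fun j => e (j + 1))
              + (-1 : ℝ) ^ (d 0) * T A (m + 1) (fun j => d (j + 1)) (fun j => e (j + 1))|
              ≤ |(-1 : ℝ) ^ (e 0) * T A m (fun j => d (j + 1)) (fun j => e (j + 1))|
                + |(-1 : ℝ) ^ (d 0) * T A (m + 1) (fun j => d (j + 1)) (fun j => e (j + 1))| :=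
                abs_add_le _ _
            _ ≤ 2 ^ (A + 1) * P' := by
                rw [abs_mul, abs_mul, abs_pow, abs_pow, abs_neg, abs_one, one_pow, one_pow,
                  one_mul, one_mul]
                exact ht
        rw [hMP1]
        by_cases h : Even (d 0 + e 0)
        · rw [if_pos h]
          refine htr.trans ?_
          have : (0:ℝ) < 2 ^ (A+1) := by positivity
          nlinarith
        · rw [if_neg h]; exact htr
    · intro m hm1
      rcases Nat.even_or_odd m with ⟨u, hu⟩ | ⟨u, hu⟩
      · -- m = 2u
        have hu' : m = 2 * u := by omega
        have hule : u + 1 ≤ 2 ^ A := by omega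
        have h1 : |T (A + 1) m d e| = |1 + (-1 : ℝ) ^ (d 0 + e 0)|
            * |T A u (fun j => d (j + 1)) (fun j => e (j + 1))| := by
          rw [hu', T_even, abs_mul]
        have h2 : |T (A + 1) (m + 1) d e|
            ≤ |T A u (fun j => d (j + 1)) (fun j => e (j + 1))|
              + |T A (u + 1) (fun j => d (j + 1)) (fun j => e (j + 1))| := by
          have : m + 1 = 2 * u + 1 := by omega
          rw [this, T_odd]
          refine (abs_add_le _ _).trans ?_
          rw [abs_mul, abs_mul, abs_pow, abs_pow, abs_neg, abs_one, one_pow, one_pow,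
            one_mul, one_mul]
        have ht2 := ih2 u hule
        have ht1 := ih1 u (by omega)
        rw [hMP2]
        by_cases h : Even (d 0 + e 0)
        · rw [if_pos h]
          rw [neg_one_pow_add_eq _ _ h, abs_two] at h1
          have hx : (2:ℝ) ^ (A + 1 + 1) * ((M' + P') / 2) = 2 * (2 ^ A * M') + 2 ^ (A+1) * P' := by
            ring
          rw [hx]
          nlinarith [abs_nonneg (T A u (fun j => d (j + 1)) (fun j => e (j + 1)))]
        · rw [if_neg h]
          rw [neg_one_pow_add_eq' _ _ h, abs_zero, zero_mul] at h1
          have hx : (2:ℝ) ^ (A + 1 + 1) * (P' / 2) = 2 ^ (A+1) * P' := by ring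
          rw [hx, h1, zero_add]
          exact h2.trans ht2
      · -- m = 2u+1
        have hule : u + 1 ≤ 2 ^ A := by omega
        have h2 : |T (A + 1) m d e|
            ≤ |T A u (fun j => d (j + 1)) (fun j => e (j + 1))|
              + |T A (u + 1) (fun j => d (j + 1)) (fun j => e (j + 1))| := by
          rw [hu, T_odd]
          refine (abs_add_le _ _).trans ?_
          rw [abs_mul, abs_mul, abs_pow, abs_pow, abs_neg, abs_one, one_pow, one_pow,
            one_mul, one_mul]
        have h1 : |T (A + 1) (m + 1) d e| = |1 + (-1 : ℝ) ^ (d 0 + e 0)|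
            * |T A (u + 1) (fun j => d (j + 1)) (fun j => e (j + 1))| := by
          have : m + 1 = 2 * (u + 1) := by omega
          rw [this, T_even, abs_mul]
        have ht2 := ih2 u hule
        have ht1 := ih1 (u + 1) hule
        rw [hMP2]
        by_cases h : Even (d 0 + e 0)
        · rw [if_pos h]
          rw [neg_one_pow_add_eq _ _ h, abs_two] at h1
          have hx : (2:ℝ) ^ (A + 1 + 1) * ((M' + P') / 2) = 2 ^ (A+1) * P' + 2 * (2 ^ A * M') := by
            ring
          rw [hx]
          nlinarith [abs_nonneg (T A (u+1) (fun j => d (j + 1)) (fun j => e (j + 1)))]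
        · rw [if_neg h]
          rw [neg_one_pow_add_eq' _ _ h, abs_zero, zero_mul] at h1
          have hx : (2:ℝ) ^ (A + 1 + 1) * (P' / 2) = 2 ^ (A+1) * P' := by ring
          rw [hx, h1, add_zero]
          exact h2.trans ht2

noncomputable def fdig (A i : ℕ) : ℕ → ℕ := fun j => (Nat.testBit i (A - 1 - j)).toNat

def zf : ℕ → ℕ := fun _ => 0

lemma toNat_testBit (i k : ℕ) : (Nat.testBit i k).toNat = i / 2 ^ k % 2 := by
  rw [Nat.testBit_eq_decide_div_mod_eq]
  rcases Nat.mod_two_eq_zero_or_one (i / 2 ^ k) with h | h <;> simp [h]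

lemma dig_eq_fdig (A i : ℕ) (x : ℝ) (hx1 : (i : ℝ) / 2 ^ A ≤ x)
    (hx2 : x < ((i : ℝ) + 1) / 2 ^ A) (j : ℕ) (hj : j < A) : dig x j = fdig A i j := by
  set k := A - 1 - j with hk
  have hkj : k + (j + 1) = A := by omega
  have hq : (0:ℕ) < 2 ^ k := Nat.pow_pos (by norm_num)
  have hA : (2 : ℝ) ^ A = 2 ^ k * 2 ^ (j + 1) := by rw [← pow_add, hkj]
  have hp1 : (0:ℝ) < 2 ^ (j+1) := by positivity
  have hp2 : (0:ℝ) < 2 ^ k := by positivity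
  have floor_eq : ⌊x * 2 ^ (j + 1)⌋ = ((i / 2 ^ k : ℕ) : ℤ) := by
    rw [Int.floor_eq_iff]
    constructor
    · calc ((( i / 2 ^ k : ℕ) : ℤ) : ℝ) = ((i / 2 ^ k : ℕ) : ℝ) := by norm_cast
        _ ≤ (i : ℝ) / (2 ^ k : ℕ) := Nat.cast_div_le
        _ = (i : ℝ) / 2 ^ A * 2 ^ (j + 1) := by push_cast; rw [hA]; field_simp
        _ ≤ x * 2 ^ (j + 1) := by
            exact mul_le_mul_of_nonneg_right hx1 (le_of_lt hp1)
    · have h1 : i < (i / 2 ^ k + 1) * 2 ^ k :=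
        (Nat.div_lt_iff_lt_mul hq).mp (Nat.lt_succ_self _)
      have h2 : (i : ℝ) + 1 ≤ ((i / 2 ^ k : ℕ) : ℝ) * 2 ^ k + 2 ^ k := by
        have : ((i : ℕ) : ℝ) + 1 ≤ (((i / 2 ^ k + 1) * 2 ^ k : ℕ) : ℝ) := by
          exact_mod_cast h1
        push_cast at this
        linarith
      calc x * 2 ^ (j + 1) < ((i : ℝ) + 1) / 2 ^ A * 2 ^ (j + 1) := by
            exact mul_lt_mul_of_pos_right hx2 hp1
        _ = ((i : ℝ) + 1) / 2 ^ k := by rw [hA]; field_simp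
        _ ≤ ((i / 2 ^ k : ℕ) : ℝ) + 1 := by
            rw [div_le_iff₀ hp2]
            linarith
        _ = (((i / 2 ^ k : ℕ) : ℤ) : ℝ) + 1 := by norm_cast
  rw [dig, floor_eq, fdig, toNat_testBit, Int.toNat_natCast]

lemma mem_cell (A : ℕ) (x : ℝ) (h0 : 0 ≤ x) (h1 : x < 1) :
    ∃ i : ℕ, i < 2 ^ A ∧ (i : ℝ) / 2 ^ A ≤ x ∧ x < ((i : ℝ) + 1) / 2 ^ A := by
  have hp : (0:ℝ) < 2 ^ A := by positivity
  have hz0 : (0:ℤ) ≤ ⌊x * 2 ^ A⌋ := Int.floor_nonneg.mpr (by positivity)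
  refine ⟨(⌊x * 2 ^ A⌋).toNat, ?_, ?_, ?_⟩
  · have : ⌊x * 2 ^ A⌋ < ((2 ^ A : ℕ) : ℤ) := by
      apply Int.floor_lt.mpr
      push_cast
      nlinarith
    omega
  · rw [div_le_iff₀ hp]
    have hc : (((⌊x * 2 ^ A⌋).toNat : ℕ) : ℝ) = ((⌊x * 2 ^ A⌋ : ℤ) : ℝ) := by
      exact_mod_cast congrArg Int.cast (Int.toNat_of_nonneg hz0)
    rw [hc]
    exact Int.floor_le _
  · rw [lt_div_iff₀ hp]
    have := Int.lt_floor_add_one (x * 2 ^ A)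
    have hc : (((⌊x * 2 ^ A⌋).toNat : ℕ) : ℝ) = ((⌊x * 2 ^ A⌋ : ℤ) : ℝ) := by
      exact_mod_cast congrArg Int.cast (Int.toNat_of_nonneg hz0)
    rw [hc]
    linarith

lemma MP_xor (A i i' : ℕ) :
    MP A (fdig A i) (fdig A i') = MP A (fdig A (i ^^^ i')) zf := by
  apply MP_congr
  intro j _
  simp only [fdig, zf, Nat.add_zero, Nat.testBit_xor]
  cases h1 : Nat.testBit i (A - 1 - j) <;> cases h2 : Nat.testBit i' (A - 1 - j) <;> simp <;> decide

lemma sum_xor (A i : ℕ) (hi : i < 2 ^ A) (F : ℕ → ℝ) :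
    ∑ i' ∈ Finset.range (2 ^ A), F (i ^^^ i') = ∑ z ∈ Finset.range (2 ^ A), F z := by
  have hinv : ∀ z : ℕ, i ^^^ (i ^^^ z) = z := fun z => by
    rw [← Nat.xor_assoc, Nat.xor_self, Nat.zero_xor]
  refine Finset.sum_equiv ⟨fun z => i ^^^ z, fun z => i ^^^ z, fun z => hinv z, fun z => hinv z⟩ ?_ ?_
  · intro z
    simp only [Finset.mem_range, Equiv.coe_fn_mk]
    constructor
    · intro hz; exact Nat.xor_lt_two_pow hi hz
    · intro hz
      have h := Nat.xor_lt_two_pow hi hz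
      rwa [hinv] at h
  · intro z _; rfl

lemma fdig_shift (A z : ℕ) : (fun j => fdig (A + 1) z (j + 1)) = fdig A z := by
  funext j
  simp only [fdig]
  congr 2
  omega

lemma zf_shift : (fun j : ℕ => zf (j + 1)) = zf := rfl

lemma testBit_add_pow (A z k : ℕ) (hz : z < 2 ^ A) (hk : k < A) :
    Nat.testBit (2 ^ A + z) k = Nat.testBit z k := by
  have h1 : (2 ^ A + z) % 2 ^ A = z := by
    rw [Nat.add_mod_left, Nat.mod_eq_of_lt hz]
  conv_rhs => rw [← h1]
  rw [Nat.testBit_mod_two_pow]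
  simp [hk]

lemma fdig_top_lo (A z : ℕ) (hz : z < 2 ^ A) : fdig (A + 1) z 0 = 0 := by
  have : A + 1 - 1 - 0 = A := by omega
  rw [fdig]
  simp only [this]
  rw [Nat.testBit_eq_false_of_lt hz]
  rfl

lemma fdig_top_hi (A z : ℕ) (hz : z < 2 ^ A) : fdig (A + 1) (2 ^ A + z) 0 = 1 := by
  have h : A + 1 - 1 - 0 = A := by omega
  rw [fdig]
  simp only [h]
  have hd : (2 ^ A + z) / 2 ^ A = 1 := by
    rw [Nat.add_comm, Nat.add_div_right _ (Nat.pow_pos (by norm_num)),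
      Nat.div_eq_of_lt hz]
  rw [Nat.testBit_eq_decide_div_mod_eq, hd]
  rfl

lemma V_rec (A : ℕ) :
    ∑ z ∈ Finset.range (2 ^ A),
        ((MP A (fdig A z) zf).1 + Real.sqrt 2 * (MP A (fdig A z) zf).2)
      = (1 + Real.sqrt 2) * ((2 + Real.sqrt 2) / 2) ^ A := by
  induction A with
  | zero => simp [MP]
  | succ A ih =>
    have hsplit : 2 ^ (A + 1) = 2 ^ A + 2 ^ A := by ring
    have h2 : Real.sqrt 2 * Real.sqrt 2 = 2 := Real.mul_self_sqrt (by norm_num)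
    have eq1 : ∀ z ∈ Finset.range (2 ^ A),
        MP (A + 1) (fdig (A + 1) z) zf
          = ((MP A (fdig A z) zf).1,
              ((MP A (fdig A z) zf).1 + (MP A (fdig A z) zf).2) / 2) := by
      intro z hz
      rw [Finset.mem_range] at hz
      rw [MP]
      have hc : Even (fdig (A + 1) z 0 + zf 0) := by
        rw [fdig_top_lo A z hz]; simp [zf]
      rw [if_pos hc]
      rw [show (fun j => fdig (A + 1) z (j + 1)) = fdig A z from fdig_shift A z]
      rfl
    have eq2 : ∀ z ∈ Finset.range (2 ^ A),
        MP (A + 1) (fdig (A + 1) (2 ^ A + z)) zf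
          = ((MP A (fdig A z) zf).2, (MP A (fdig A z) zf).2 / 2) := by
      intro z hz
      rw [Finset.mem_range] at hz
      rw [MP]
      have hc : ¬ Even (fdig (A + 1) (2 ^ A + z) 0 + zf 0) := by
        rw [fdig_top_hi A z hz]; simp [zf]
      rw [if_neg hc]
      have hq : MP A (fun j => fdig (A + 1) (2 ^ A + z) (j + 1)) (fun j => zf (j + 1))
          = MP A (fdig A z) zf := by
        apply MP_congr
        intro j hj
        have : fdig (A + 1) (2 ^ A + z) (j + 1) = fdig A z j := by
          simp only [fdig]
          have harg : A + 1 - 1 - (j + 1) = A - 1 - j := by omega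
          rw [harg, testBit_add_pow A z (A - 1 - j) hz (by omega)]
        rw [this]
        exact Iff.rfl
      rw [hq]
    rw [hsplit, Finset.sum_range_add]
    have s1 : ∀ z ∈ Finset.range (2 ^ A),
        ((MP (A+1) (fdig (A+1) z) zf).1 + Real.sqrt 2 * (MP (A+1) (fdig (A+1) z) zf).2)
        = ((MP A (fdig A z) zf).1
            + Real.sqrt 2 * (((MP A (fdig A z) zf).1 + (MP A (fdig A z) zf).2) / 2)) := by
      intro z hz; rw [eq1 z hz]
    have s2 : ∀ z ∈ Finset.range (2 ^ A),
        ((MP (A+1) (fdig (A+1) (2 ^ A + z)) zf).1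
            + Real.sqrt 2 * (MP (A+1) (fdig (A+1) (2 ^ A + z)) zf).2)
        = ((MP A (fdig A z) zf).2 + Real.sqrt 2 * ((MP A (fdig A z) zf).2 / 2)) := by
      intro z hz; rw [eq2 z hz]
    rw [Finset.sum_congr rfl s1, Finset.sum_congr rfl s2, ← Finset.sum_add_distrib]
    have key : ∀ z ∈ Finset.range (2 ^ A),
        ((MP A (fdig A z) zf).1
            + Real.sqrt 2 * (((MP A (fdig A z) zf).1 + (MP A (fdig A z) zf).2) / 2)
          + ((MP A (fdig A z) zf).2 + Real.sqrt 2 * ((MP A (fdig A z) zf).2 / 2)))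
        = ((2 + Real.sqrt 2) / 2)
            * ((MP A (fdig A z) zf).1 + Real.sqrt 2 * (MP A (fdig A z) zf).2) := by
      intro z _
      set M := (MP A (fdig A z) zf).1
      set P := (MP A (fdig A z) zf).2
      linear_combination (-(P / 2)) * h2
    rw [Finset.sum_congr rfl key, ← Finset.mul_sum, ih]
    ring

lemma total_sum_le (A : ℕ) :
    ∑ i ∈ Finset.range (2 ^ A), ∑ i' ∈ Finset.range (2 ^ A),
        (MP A (fdig A i) (fdig A i')).1
      ≤ (2 ^ A : ℝ) * ((1 + Real.sqrt 2) * ((2 + Real.sqrt 2) / 2) ^ A) := by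
  have hinner : ∀ i ∈ Finset.range (2 ^ A),
      ∑ i' ∈ Finset.range (2 ^ A), (MP A (fdig A i) (fdig A i')).1
        ≤ (1 + Real.sqrt 2) * ((2 + Real.sqrt 2) / 2) ^ A := by
    intro i hi
    rw [Finset.mem_range] at hi
    have e1 : ∀ i' ∈ Finset.range (2 ^ A),
        (MP A (fdig A i) (fdig A i')).1 = (MP A (fdig A (i ^^^ i')) zf).1 := by
      intro i' _; rw [MP_xor]
    rw [Finset.sum_congr rfl e1, sum_xor A i hi (fun z => (MP A (fdig A z) zf).1)]
    rw [← V_rec A]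
    apply Finset.sum_le_sum
    intro z _
    have := (MP_pos A (fdig A z) zf).1
    nlinarith [Real.sqrt_nonneg 2]
  calc ∑ i ∈ Finset.range (2 ^ A), ∑ i' ∈ Finset.range (2 ^ A),
        (MP A (fdig A i) (fdig A i')).1
      ≤ ∑ i ∈ Finset.range (2 ^ A),
          ((1 + Real.sqrt 2) * ((2 + Real.sqrt 2) / 2) ^ A) := Finset.sum_le_sum hinner
    _ = (2 ^ A : ℝ) * ((1 + Real.sqrt 2) * ((2 + Real.sqrt 2) / 2) ^ A) := by
        rw [Finset.sum_const, Finset.card_range, nsmul_eq_mul]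
        push_cast
        ring

/-- There exist `C` and `δ ∈ (0,1)` such that for every `A ∈ ℕ`,
`∫_{[0,1)²} sup_{n ≤ 2^A} |2^{−A} Σ_{k<2^A} ω_k(x¹) ω_{k+n}(x²)| dx ≤ C δ^A`. -/
theorem walsh_product_decay :
    ∃ C : ℝ, 0 < C ∧ ∃ δ : ℝ, 0 < δ ∧ δ < 1 ∧ ∀ A : ℕ,
      ∫⁻ x in Set.Ico (0 : ℝ) 1 ×ˢ Set.Ico (0 : ℝ) 1,
        ⨆ (n : ℕ) (_ : n ≤ 2 ^ A),
          ENNReal.ofReal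
            |(2 ^ A : ℝ)⁻¹ * ∑ k ∈ Finset.range (2 ^ A), walsh k x.1 * walsh (k + n) x.2|
      ≤ ENNReal.ofReal (C * δ ^ A) := by
  have hs2 : Real.sqrt 2 * Real.sqrt 2 = 2 := Real.mul_self_sqrt (by norm_num)
  have hs2nn : (0:ℝ) ≤ Real.sqrt 2 := Real.sqrt_nonneg 2
  refine ⟨1 + Real.sqrt 2, by positivity, (2 + Real.sqrt 2) / 4, by positivity, ?_, ?_⟩
  · nlinarith
  intro A
  classical
  have hpowpos : (0:ℝ) < 2 ^ A := by positivity
  have hA2 : (2:ℕ) ^ (A + 1) = 2 ^ A + 2 ^ A := by ring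
  set sq : Set (ℝ × ℝ) := Set.Ico (0:ℝ) 1 ×ˢ Set.Ico (0:ℝ) 1 with hsq
  set cell : ℕ → Set ℝ := fun i => Set.Ico ((i:ℝ) / 2 ^ A) (((i:ℝ) + 1) / 2 ^ A) with hcell
  set val : ℕ × ℕ → ℝ := fun q => (MP A (fdig A q.1) (fdig A q.2)).1 with hval
  have hval0 : ∀ q, 0 ≤ val q := by
    intro q
    obtain ⟨h1, h2⟩ := MP_pos A (fdig A q.1) (fdig A q.2)
    simp only [hval]
    linarith
  set R : Finset (ℕ × ℕ) := Finset.range (2 ^ A) ×ˢ Finset.range (2 ^ A) with hR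
  set G : ℝ × ℝ → ENNReal := fun p =>
    ∑ q ∈ R, Set.indicator (cell q.1 ×ˢ cell q.2) (fun _ => ENNReal.ofReal (val q)) p with hG
  have hcellmeas : ∀ q : ℕ × ℕ, MeasurableSet (cell q.1 ×ˢ cell q.2) := fun q =>
    (measurableSet_Ico).prod measurableSet_Ico
  have step1 : ∀ p : ℝ × ℝ,
      (⨆ (n : ℕ) (_ : n ≤ 2 ^ A),
        ENNReal.ofReal
          |(2 ^ A : ℝ)⁻¹ * ∑ k ∈ Finset.range (2 ^ A), walsh k p.1 * walsh (k + n) p.2|)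
      ≤ ENNReal.ofReal ((MP A (dig p.1) (dig p.2)).1) := by
    intro p
    refine iSup_le fun n => iSup_le fun hn => ENNReal.ofReal_le_ofReal ?_
    have hsum : ∑ k ∈ Finset.range (2 ^ A), walsh k p.1 * walsh (k + n) p.2
        = T A n (dig p.1) (dig p.2) := by
      refine Finset.sum_congr rfl fun k hk => ?_
      rw [Finset.mem_range] at hk
      have hk1 : k < 2 ^ (k + 1) :=
        lt_of_lt_of_le (Nat.lt_two_pow_self (n := k)) (Nat.pow_le_pow_right (by norm_num) (Nat.le_succ k))
      have hk2 : k + n < 2 ^ (k + n + 1) :=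
        lt_of_lt_of_le (Nat.lt_two_pow_self (n := k + n)) (Nat.pow_le_pow_right (by norm_num) (Nat.le_succ _))
      have hk3 : k + n < 2 ^ (A + 1) := by omega
      rw [walsh_eq_W, walsh_eq_W, W_stable (dig p.1) hk1 hk, W_stable (dig p.2) hk2 hk3]
    rw [hsum, abs_mul, abs_of_pos (show (0:ℝ) < (2 ^ A : ℝ)⁻¹ by positivity),
      inv_mul_le_iff₀ hpowpos]
    exact (T_bound A (dig p.1) (dig p.2)).1 n hn
  have step2 : ∀ p ∈ sq, ENNReal.ofReal ((MP A (dig p.1) (dig p.2)).1) ≤ G p := by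
    intro p hp
    rw [hsq, Set.mem_prod] at hp
    obtain ⟨i, hi, hi1, hi2⟩ := mem_cell A p.1 hp.1.1 hp.1.2
    obtain ⟨i', hi', hi'1, hi'2⟩ := mem_cell A p.2 hp.2.1 hp.2.2
    have hd1 : MP A (dig p.1) (dig p.2) = MP A (fdig A i) (fdig A i') := by
      apply MP_congr
      intro j hj
      rw [dig_eq_fdig A i p.1 hi1 hi2 j hj, dig_eq_fdig A i' p.2 hi'1 hi'2 j hj]
    have hmem : p ∈ cell i ×ˢ cell i' := ⟨⟨hi1, hi2⟩, ⟨hi'1, hi'2⟩⟩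
    have hterm : ENNReal.ofReal ((MP A (dig p.1) (dig p.2)).1)
        = Set.indicator (cell (i, i').1 ×ˢ cell (i, i').2)
            (fun _ => ENNReal.ofReal (val (i, i'))) p := by
      rw [Set.indicator_of_mem hmem, hd1]
    rw [hterm, hG]
    exact Finset.single_le_sum (f := fun q : ℕ × ℕ =>
        Set.indicator (cell q.1 ×ˢ cell q.2) (fun _ => ENNReal.ofReal (val q)) p)
      (fun q _ => zero_le)
      (Finset.mem_product.mpr ⟨Finset.mem_range.mpr hi, Finset.mem_range.mpr hi'⟩)
  have hlen : ∀ i : ℕ, volume (cell i) = ENNReal.ofReal (1 / 2 ^ A) := by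
    intro i
    rw [hcell]
    simp only
    rw [Real.volume_Ico]
    congr 1
    field_simp
    ring
  have step3 : ∀ q : ℕ × ℕ,
      (∫⁻ p in sq, Set.indicator (cell q.1 ×ˢ cell q.2)
          (fun _ => ENNReal.ofReal (val q)) p)
        ≤ ENNReal.ofReal (val q) * (ENNReal.ofReal (1 / 2 ^ A) * ENNReal.ofReal (1 / 2 ^ A)) := by
    intro q
    rw [lintegral_indicator (hcellmeas q), setLIntegral_const,
      Measure.restrict_apply (hcellmeas q)]
    have hvol : volume ((cell q.1 ×ˢ cell q.2) ∩ sq)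
        ≤ ENNReal.ofReal (1 / 2 ^ A) * ENNReal.ofReal (1 / 2 ^ A) := by
      refine le_trans (measure_mono Set.inter_subset_left) ?_
      rw [show (volume : Measure (ℝ × ℝ)) = Measure.prod volume volume from rfl,
        Measure.prod_prod, hlen, hlen]
    exact mul_le_mul_right hvol _
  have main : (∫⁻ p in sq,
      ⨆ (n : ℕ) (_ : n ≤ 2 ^ A),
        ENNReal.ofReal
          |(2 ^ A : ℝ)⁻¹ * ∑ k ∈ Finset.range (2 ^ A), walsh k p.1 * walsh (k + n) p.2|)
      ≤ ∑ q ∈ R, ENNReal.ofReal (val q) * (ENNReal.ofReal (1 / 2 ^ A) * ENNReal.ofReal (1 / 2 ^ A)) := by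
    calc (∫⁻ p in sq,
        ⨆ (n : ℕ) (_ : n ≤ 2 ^ A),
          ENNReal.ofReal
            |(2 ^ A : ℝ)⁻¹ * ∑ k ∈ Finset.range (2 ^ A), walsh k p.1 * walsh (k + n) p.2|)
        ≤ ∫⁻ p in sq, ENNReal.ofReal ((MP A (dig p.1) (dig p.2)).1) := lintegral_mono step1
      _ ≤ ∫⁻ p in sq, G p :=
          setLIntegral_mono' (measurableSet_Ico.prod measurableSet_Ico) step2
      _ = ∑ q ∈ R, ∫⁻ p in sq, Set.indicator (cell q.1 ×ˢ cell q.2)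
            (fun _ => ENNReal.ofReal (val q)) p :=
          lintegral_finset_sum R (fun q _ =>
            (measurable_const.indicator (hcellmeas q)))
      _ ≤ ∑ q ∈ R, ENNReal.ofReal (val q) * (ENNReal.ofReal (1 / 2 ^ A) * ENNReal.ofReal (1 / 2 ^ A)) :=
          Finset.sum_le_sum fun q _ => step3 q
  refine main.trans ?_
  have hc : (0:ℝ) ≤ 1 / 2 ^ A := by positivity
  have hconv : ∀ q ∈ R, ENNReal.ofReal (val q) * (ENNReal.ofReal (1 / 2 ^ A) * ENNReal.ofReal (1 / 2 ^ A))
      = ENNReal.ofReal (val q * (1 / 2 ^ A * (1 / 2 ^ A))) := by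
    intro q _
    rw [ENNReal.ofReal_mul (hval0 q), ENNReal.ofReal_mul hc]
  rw [Finset.sum_congr rfl hconv,
    ← ENNReal.ofReal_sum_of_nonneg (fun q _ => mul_nonneg (hval0 q) (by positivity))]
  apply ENNReal.ofReal_le_ofReal
  have hsum : ∑ q ∈ R, val q * (1 / 2 ^ A * (1 / 2 ^ A))
      = (∑ i ∈ Finset.range (2 ^ A), ∑ i' ∈ Finset.range (2 ^ A),
          (MP A (fdig A i) (fdig A i')).1) * (1 / 2 ^ A * (1 / 2 ^ A)) := by
    rw [hR, Finset.sum_product (f := fun q : ℕ × ℕ => val q * (1 / 2 ^ A * (1 / 2 ^ A)))]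
    rw [Finset.sum_mul]
    refine Finset.sum_congr rfl fun i _ => ?_
    rw [Finset.sum_mul]
  rw [hsum]
  have hle := total_sum_le A
  have hcpos : (0:ℝ) ≤ 1 / 2 ^ A * (1 / 2 ^ A) := by positivity
  calc (∑ i ∈ Finset.range (2 ^ A), ∑ i' ∈ Finset.range (2 ^ A),
        (MP A (fdig A i) (fdig A i')).1) * (1 / 2 ^ A * (1 / 2 ^ A))
      ≤ ((2 ^ A : ℝ) * ((1 + Real.sqrt 2) * ((2 + Real.sqrt 2) / 2) ^ A))
          * (1 / 2 ^ A * (1 / 2 ^ A)) := mul_le_mul_of_nonneg_right hle hcpos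
    _ = (1 + Real.sqrt 2) * ((2 + Real.sqrt 2) / 4) ^ A := by
        rw [div_pow, div_pow]
        have h4 : (4:ℝ) ^ A = 2 ^ A * 2 ^ A := by
          rw [← mul_pow]; norm_num
        rw [h4]
        field_simp
end

section
/- Let n, k, l, i ∈ ℕ and suppose there exists a positive integer s such that the s-th binary blocks satisfy (n_{4s−1},n_{4s−2},n_{4s−3},n_{4s−4}) = (0,0,1,0), (k_{4s−1},k_{4s−2},k_{4s−3},k_{4s−4}) = (0,0,0,0), (l_{4s−1},l_{4s−2},l_{4s−3},l_{4s−4}) = (0,0,1,0) and (i_{4s−1},i_{4s−2},i_{4s−3},i_{4s−4}) = (0,1,0,0), where m_j denotes the j-th binary digit of m. Then (k+n) ⊕ (l+n) ⊕ (i+n) ≠ (k ⊕ l ⊕ i) + n. -/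
private lemma testBit_shift (x m j : ℕ) :
    x.testBit (m + j) = (x / 2 ^ m).testBit j := by
  rw [Nat.testBit_eq_decide_div_mod_eq, Nat.testBit_eq_decide_div_mod_eq, Nat.div_div_eq_div_mul, ← pow_add]

private lemma mod16_of_bits (x m : ℕ) (b0 b1 b2 b3 : Bool)
    (h0 : x.testBit m = b0) (h1 : x.testBit (m + 1) = b1)
    (h2 : x.testBit (m + 2) = b2) (h3 : x.testBit (m + 3) = b3) :
    (x / 2 ^ m) % 16 = b0.toNat + 2 * b1.toNat + 4 * b2.toNat + 8 * b3.toNat := by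
  have h0' : x.testBit (m + 0) = b0 := h0
  rw [testBit_shift] at h0' h1 h2 h3
  set y := x / 2 ^ m with hy
  rw [Nat.testBit_eq_decide_div_mod_eq] at h0' h1 h2 h3
  norm_num at h0' h1 h2 h3
  cases b0 <;> cases b1 <;> cases b2 <;> cases b3 <;>
    simp_all <;> omega

private lemma div_add (x n m : ℕ) :
    (x + n) / 2 ^ m = x / 2 ^ m + n / 2 ^ m + (x % 2 ^ m + n % 2 ^ m) / 2 ^ m := by
  have hp : 0 < 2 ^ m := Nat.pow_pos (by norm_num)
  conv_lhs => rw [← Nat.div_add_mod x (2 ^ m), ← Nat.div_add_mod n (2 ^ m)]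
  have : 2 ^ m * (x / 2 ^ m) + x % 2 ^ m + (2 ^ m * (n / 2 ^ m) + n % 2 ^ m)
      = 2 ^ m * (x / 2 ^ m + n / 2 ^ m) + (x % 2 ^ m + n % 2 ^ m) := by ring
  rw [this, Nat.mul_add_div hp]

private lemma add_mod16 (x n m v w : ℕ) (hx : x / 2 ^ m % 16 = v)
    (hn : n / 2 ^ m % 16 = w) :
    (x + n) / 2 ^ m % 16 = (v + w) % 16 ∨ (x + n) / 2 ^ m % 16 = (v + w + 1) % 16 := by
  have hp : 0 < 2 ^ m := Nat.pow_pos (by norm_num)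
  have hc : (x % 2 ^ m + n % 2 ^ m) / 2 ^ m ≤ 1 := by
    have h1 : x % 2 ^ m < 2 ^ m := Nat.mod_lt _ hp
    have h2 : n % 2 ^ m < 2 ^ m := Nat.mod_lt _ hp
    have h3 : x % 2 ^ m + n % 2 ^ m < 2 * 2 ^ m := by omega
    have := (Nat.div_lt_iff_lt_mul hp).mpr (by omega : x % 2 ^ m + n % 2 ^ m < 2 * 2 ^ m)
    omega
  rw [div_add]
  revert hx hn hc
  generalize x / 2 ^ m = a
  generalize n / 2 ^ m = b
  generalize (x % 2 ^ m + n % 2 ^ m) / 2 ^ m = c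
  intro hx hn hc
  omega

private lemma bit3_eq (z m : ℕ) : z.testBit (m + 3) = decide (8 ≤ z / 2 ^ m % 16) := by
  rw [testBit_shift, Nat.testBit_eq_decide_div_mod_eq]
  rw [show (2 : ℕ) ^ 3 = 8 by norm_num, decide_eq_decide]
  generalize z / 2 ^ m = y
  omega

/-- If some binary block of `(n,k,l,i)` has the excluded pattern
`((0,0,1,0),(0,0,0,0),(0,0,1,0),(0,1,0,0))`, then
`(k+n) ⊕ (l+n) ⊕ (i+n) ≠ (k ⊕ l ⊕ i) + n`, where `⊕` is bitwise XOR. -/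
theorem xor_add_block_pattern (n k l i : ℕ)
    (h : ∃ s : ℕ, 0 < s ∧
      n.testBit (4 * s - 1) = false ∧ n.testBit (4 * s - 2) = false ∧
      n.testBit (4 * s - 3) = true ∧ n.testBit (4 * s - 4) = false ∧
      k.testBit (4 * s - 1) = false ∧ k.testBit (4 * s - 2) = false ∧
      k.testBit (4 * s - 3) = false ∧ k.testBit (4 * s - 4) = false ∧
      l.testBit (4 * s - 1) = false ∧ l.testBit (4 * s - 2) = false ∧
      l.testBit (4 * s - 3) = true ∧ l.testBit (4 * s - 4) = false ∧
      i.testBit (4 * s - 1) = false ∧ i.testBit (4 * s - 2) = true ∧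
      i.testBit (4 * s - 3) = false ∧ i.testBit (4 * s - 4) = false) :
    (k + n) ^^^ (l + n) ^^^ (i + n) ≠ (k ^^^ l ^^^ i) + n := by
  obtain ⟨s, hs, hn1, hn2, hn3, hn4, hk1, hk2, hk3, hk4,
    hl1, hl2, hl3, hl4, hi1, hi2, hi3, hi4⟩ := h
  set m := 4 * s - 4 with hm
  have e1 : 4 * s - 1 = m + 3 := by omega
  have e2 : 4 * s - 2 = m + 2 := by omega
  have e3 : 4 * s - 3 = m + 1 := by omega
  rw [e1] at hn1 hk1 hl1 hi1
  rw [e2] at hn2 hk2 hl2 hi2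
  rw [e3] at hn3 hk3 hl3 hi3
  have Hn : n / 2 ^ m % 16 = 2 := by
    simpa using mod16_of_bits n m false true false false hn4 hn3 hn2 hn1
  have Hk : k / 2 ^ m % 16 = 0 := by
    simpa using mod16_of_bits k m false false false false hk4 hk3 hk2 hk1
  have Hl : l / 2 ^ m % 16 = 2 := by
    simpa using mod16_of_bits l m false true false false hl4 hl3 hl2 hl1
  have Hi : i / 2 ^ m % 16 = 4 := by
    simpa using mod16_of_bits i m false false true false hi4 hi3 hi2 hi1
  have Hx : (k ^^^ l ^^^ i) / 2 ^ m % 16 = 6 := by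
    have b0 : (k ^^^ l ^^^ i).testBit m = false := by
      simp [Nat.testBit_xor, hk4, hl4, hi4]
    have b1 : (k ^^^ l ^^^ i).testBit (m + 1) = true := by
      simp [Nat.testBit_xor, hk3, hl3, hi3]
    have b2 : (k ^^^ l ^^^ i).testBit (m + 2) = true := by
      simp [Nat.testBit_xor, hk2, hl2, hi2]
    have b3 : (k ^^^ l ^^^ i).testBit (m + 3) = false := by
      simp [Nat.testBit_xor, hk1, hl1, hi1]
    simpa using mod16_of_bits _ m false true true false b0 b1 b2 b3
  have Bk : (k + n).testBit (m + 3) = false := by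
    rw [bit3_eq]
    rcases add_mod16 k n m 0 2 Hk Hn with h' | h' <;> rw [h'] <;> simp
  have Bl : (l + n).testBit (m + 3) = false := by
    rw [bit3_eq]
    rcases add_mod16 l n m 2 2 Hl Hn with h' | h' <;> rw [h'] <;> simp
  have Bi : (i + n).testBit (m + 3) = false := by
    rw [bit3_eq]
    rcases add_mod16 i n m 4 2 Hi Hn with h' | h' <;> rw [h'] <;> simp
  have Br : ((k ^^^ l ^^^ i) + n).testBit (m + 3) = true := by
    rw [bit3_eq]
    rcases add_mod16 (k ^^^ l ^^^ i) n m 6 2 Hx Hn with h' | h' <;> rw [h'] <;> simp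
  intro heq
  have := congrArg (fun z => z.testBit (m + 3)) heq
  simp only [Nat.testBit_xor, Bk, Bl, Bi, Br] at this
  simp at this
end

section
/- For every A ∈ ℕ, the number of quadruples (n,k,l,i) ∈ {0,1,…,2^A−1}⁴ satisfying (k+n) ⊕ (l+n) ⊕ (i+n) = (k ⊕ l ⊕ i) + n is at most (2^{16}−1)^{⌊A/4⌋} · 2^{12}. -/
section XorAddAux

lemma xor_mod_pow (a b m : ℕ) : (a ^^^ b) % 2 ^ m = a % 2 ^ m ^^^ b % 2 ^ m := by
  apply Nat.eq_of_testBit_eq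
  intro i
  by_cases h : i < m <;> simp [Nat.testBit_mod_two_pow, Nat.testBit_xor, h]

lemma xor_div_pow (a b m : ℕ) : (a ^^^ b) / 2 ^ m = a / 2 ^ m ^^^ b / 2 ^ m := by
  rw [← Nat.shiftRight_eq_div_pow, ← Nat.shiftRight_eq_div_pow, ← Nat.shiftRight_eq_div_pow]
  apply Nat.eq_of_testBit_eq
  intro i
  simp [Nat.testBit_shiftRight, Nat.testBit_xor]

lemma xor_mod16 (a b : ℕ) : (a ^^^ b) % 16 = a % 16 ^^^ b % 16 := by
  simpa using xor_mod_pow a b 4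

lemma add_div_pow (m k n : ℕ) :
    (k + n) / 2 ^ m = k / 2 ^ m + n / 2 ^ m + (k % 2 ^ m + n % 2 ^ m) / 2 ^ m := by
  conv_lhs => rw [← Nat.div_add_mod k (2 ^ m), ← Nat.div_add_mod n (2 ^ m)]
  rw [show 2 ^ m * (k / 2 ^ m) + k % 2 ^ m + (2 ^ m * (n / 2 ^ m) + n % 2 ^ m)
      = (k % 2 ^ m + n % 2 ^ m) + 2 ^ m * (k / 2 ^ m + n / 2 ^ m) by ring,
    Nat.add_mul_div_left _ _ (Nat.two_pow_pos m)]
  ring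

lemma xor_modEq {m a a' b b' : ℕ} (ha : a ≡ a' [MOD 2 ^ m]) (hb : b ≡ b' [MOD 2 ^ m]) :
    a ^^^ b ≡ a' ^^^ b' [MOD 2 ^ m] := by
  unfold Nat.ModEq at *
  rw [xor_mod_pow, xor_mod_pow, ha, hb]

/-- the quadruple domain -/
def R4 (m : ℕ) : Finset (ℕ × ℕ × ℕ × ℕ) :=
  Finset.range m ×ˢ Finset.range m ×ˢ Finset.range m ×ˢ Finset.range m

lemma mem_R4 {m : ℕ} {x : ℕ × ℕ × ℕ × ℕ} :
    x ∈ R4 m ↔ x.1 < m ∧ x.2.1 < m ∧ x.2.2.1 < m ∧ x.2.2.2 < m := by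
  simp [R4, Finset.mem_product]

lemma card_R4 (m : ℕ) : (R4 m).card = m ^ 4 := by
  simp [R4]; ring

/-- the mod-`2^m` version of the condition -/
def qcond (m : ℕ) (x : ℕ × ℕ × ℕ × ℕ) : Prop :=
  ((x.2.1 + x.1) ^^^ (x.2.2.1 + x.1) ^^^ (x.2.2.2 + x.1)) % 2 ^ m
    = ((x.2.1 ^^^ x.2.2.1 ^^^ x.2.2.2) + x.1) % 2 ^ m

instance (m : ℕ) : DecidablePred (qcond m) := fun x => by unfold qcond; infer_instance

def sols (m : ℕ) : Finset (ℕ × ℕ × ℕ × ℕ) := (R4 (2 ^ m)).filter (qcond m)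

def lo (m : ℕ) (x : ℕ × ℕ × ℕ × ℕ) : ℕ × ℕ × ℕ × ℕ :=
  (x.1 % 2 ^ m, x.2.1 % 2 ^ m, x.2.2.1 % 2 ^ m, x.2.2.2 % 2 ^ m)

def hi (m : ℕ) (x : ℕ × ℕ × ℕ × ℕ) : ℕ × ℕ × ℕ × ℕ :=
  (x.1 / 2 ^ m, x.2.1 / 2 ^ m, x.2.2.1 / 2 ^ m, x.2.2.2 / 2 ^ m)

/-- the block condition on the 4 bits above position `m`, with incoming carries
computed from the lower part `p`. -/
def bcond (m : ℕ) (p x : ℕ × ℕ × ℕ × ℕ) : Prop :=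
  ((x.2.1 + x.1 + (p.2.1 + p.1) / 2 ^ m) % 16) ^^^
      ((x.2.2.1 + x.1 + (p.2.2.1 + p.1) / 2 ^ m) % 16) ^^^
      ((x.2.2.2 + x.1 + (p.2.2.2 + p.1) / 2 ^ m) % 16)
    = ((x.2.1 ^^^ x.2.2.1 ^^^ x.2.2.2) + x.1
        + ((p.2.1 ^^^ p.2.2.1 ^^^ p.2.2.2) + p.1) / 2 ^ m) % 16

instance (m : ℕ) (p : ℕ × ℕ × ℕ × ℕ) : DecidablePred (bcond m p) := fun x => by
  unfold bcond; infer_instance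

/-- the mod-`2^m` condition passes to the low parts -/
lemma qcond_lo (m : ℕ) (x : ℕ × ℕ × ℕ × ℕ)
    (h : ((x.2.1 + x.1) ^^^ (x.2.2.1 + x.1) ^^^ (x.2.2.2 + x.1)) % 2 ^ m
      = ((x.2.1 ^^^ x.2.2.1 ^^^ x.2.2.2) + x.1) % 2 ^ m) : qcond m (lo m x) := by
  obtain ⟨n, k, l, i⟩ := x
  have h' : ((k + n) ^^^ (l + n) ^^^ (i + n)) ≡ ((k ^^^ l ^^^ i) + n) [MOD 2 ^ m] := h
  have mm : ∀ a : ℕ, a % 2 ^ m ≡ a [MOD 2 ^ m] := fun a => Nat.mod_modEq a _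
  show ((k % 2 ^ m + n % 2 ^ m) ^^^ (l % 2 ^ m + n % 2 ^ m) ^^^ (i % 2 ^ m + n % 2 ^ m)) % 2 ^ m
      = ((k % 2 ^ m ^^^ l % 2 ^ m ^^^ i % 2 ^ m) + n % 2 ^ m) % 2 ^ m
  have h1 : (k % 2 ^ m + n % 2 ^ m) ^^^ (l % 2 ^ m + n % 2 ^ m) ^^^ (i % 2 ^ m + n % 2 ^ m)
      ≡ (k + n) ^^^ (l + n) ^^^ (i + n) [MOD 2 ^ m] :=
    xor_modEq (xor_modEq ((mm k).add (mm n)) ((mm l).add (mm n))) ((mm i).add (mm n))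
  have h2 : (k % 2 ^ m ^^^ l % 2 ^ m ^^^ i % 2 ^ m) + n % 2 ^ m
      ≡ (k ^^^ l ^^^ i) + n [MOD 2 ^ m] :=
    (xor_modEq (xor_modEq (mm k) (mm l)) (mm i)).add (mm n)
  exact h1.trans (h'.trans h2.symm)

/-- the mod-`2^(m+4)` condition implies the block condition for the split -/
lemma bcond_of_qcond (m : ℕ) (x : ℕ × ℕ × ℕ × ℕ) (h : qcond (m + 4) x) :
    bcond m (lo m x) (hi m x) := by
  obtain ⟨n, k, l, i⟩ := x
  have h' : ((k + n) ^^^ (l + n) ^^^ (i + n)) % 2 ^ (m + 4)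
      = ((k ^^^ l ^^^ i) + n) % 2 ^ (m + 4) := h
  have h16 : (2 : ℕ) ^ m * 16 = 2 ^ (m + 4) := by rw [pow_add]; norm_num
  show ((k / 2 ^ m + n / 2 ^ m + (k % 2 ^ m + n % 2 ^ m) / 2 ^ m) % 16) ^^^
      ((l / 2 ^ m + n / 2 ^ m + (l % 2 ^ m + n % 2 ^ m) / 2 ^ m) % 16) ^^^
      ((i / 2 ^ m + n / 2 ^ m + (i % 2 ^ m + n % 2 ^ m) / 2 ^ m) % 16)
    = ((k / 2 ^ m ^^^ l / 2 ^ m ^^^ i / 2 ^ m) + n / 2 ^ m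
        + ((k % 2 ^ m ^^^ l % 2 ^ m ^^^ i % 2 ^ m) + n % 2 ^ m) / 2 ^ m) % 16
  have eL : ((k + n) ^^^ (l + n) ^^^ (i + n)) / 2 ^ m
      = (k / 2 ^ m + n / 2 ^ m + (k % 2 ^ m + n % 2 ^ m) / 2 ^ m) ^^^
        (l / 2 ^ m + n / 2 ^ m + (l % 2 ^ m + n % 2 ^ m) / 2 ^ m) ^^^
        (i / 2 ^ m + n / 2 ^ m + (i % 2 ^ m + n % 2 ^ m) / 2 ^ m) := by
    rw [xor_div_pow, xor_div_pow, add_div_pow m k n, add_div_pow m l n, add_div_pow m i n]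
  have eR : ((k ^^^ l ^^^ i) + n) / 2 ^ m
      = (k / 2 ^ m ^^^ l / 2 ^ m ^^^ i / 2 ^ m) + n / 2 ^ m
        + ((k % 2 ^ m ^^^ l % 2 ^ m ^^^ i % 2 ^ m) + n % 2 ^ m) / 2 ^ m := by
    rw [add_div_pow m (k ^^^ l ^^^ i) n, xor_div_pow, xor_div_pow, xor_mod_pow, xor_mod_pow]
  rw [← xor_mod16, ← xor_mod16, ← eL, ← eR,
    ← Nat.mod_mul_right_div_self, ← Nat.mod_mul_right_div_self, h16, h']

/-- for each carry pattern the block condition has a counterexample, so at most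
`2^16 - 1` blocks satisfy it. -/
lemma bcount (a b c d : ℕ) (ha : a ≤ 1) (hb : b ≤ 1) (hc : c ≤ 1) (hd : d ≤ 1) :
    ((R4 16).filter (fun x : ℕ × ℕ × ℕ × ℕ =>
      ((x.2.1 + x.1 + a) % 16) ^^^ ((x.2.2.1 + x.1 + b) % 16) ^^^ ((x.2.2.2 + x.1 + c) % 16)
        = ((x.2.1 ^^^ x.2.2.1 ^^^ x.2.2.2) + x.1 + d) % 16)).card ≤ 65535 := by
  have hss : (R4 16).filter (fun x : ℕ × ℕ × ℕ × ℕ =>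
      ((x.2.1 + x.1 + a) % 16) ^^^ ((x.2.2.1 + x.1 + b) % 16) ^^^ ((x.2.2.2 + x.1 + c) % 16)
        = ((x.2.1 ^^^ x.2.2.1 ^^^ x.2.2.2) + x.1 + d) % 16) ⊂ R4 16 := by
    rw [Finset.filter_ssubset]
    refine ⟨(1, 0, 2, 5), by simp [mem_R4], ?_⟩
    interval_cases a <;> interval_cases b <;> interval_cases c <;> interval_cases d <;> decide
  have := Finset.card_lt_card hss
  rw [card_R4] at this
  omega

lemma step (m : ℕ) : (sols (m + 4)).card ≤ 65535 * (sols m).card := by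
  classical
  have hpos : 0 < 2 ^ m := Nat.two_pow_pos m
  have key : (sols (m + 4)).card
      ≤ ((sols m).sigma (fun p => (R4 16).filter (bcond m p))).card := by
    apply Finset.card_le_card_of_injOn (fun x => ⟨lo m x, hi m x⟩)
    · intro x hx
      rw [Finset.mem_coe, sols, Finset.mem_filter, mem_R4] at hx
      obtain ⟨⟨h1, h2, h3, h4⟩, hc⟩ := hx
      rw [Finset.mem_coe, Finset.mem_sigma]
      constructor
      · rw [sols, Finset.mem_filter]
        refine ⟨?_, ?_⟩
        · rw [mem_R4]
          exact ⟨Nat.mod_lt _ hpos, Nat.mod_lt _ hpos, Nat.mod_lt _ hpos, Nat.mod_lt _ hpos⟩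
        · apply qcond_lo
          have := congrArg (· % 2 ^ m) hc
          simpa [Nat.mod_mod_of_dvd _ (pow_dvd_pow 2 (by omega : m ≤ m + 4))] using this
      · rw [Finset.mem_filter]
        constructor
        · rw [mem_R4]
          have hd : ∀ y : ℕ, y < 2 ^ (m + 4) → y / 2 ^ m < 16 := by
            intro y hy
            rw [Nat.div_lt_iff_lt_mul hpos]
            calc y < 2 ^ (m + 4) := hy
              _ = 16 * 2 ^ m := by rw [pow_add]; ring
          exact ⟨hd _ h1, hd _ h2, hd _ h3, hd _ h4⟩
        · exact bcond_of_qcond m x hc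
    · intro x hx y hy hxy
      injection hxy with h1 h2
      have h2' : hi m x = hi m y := h2
      unfold lo at h1
      unfold hi at h2'
      obtain ⟨x1, x2, x3, x4⟩ := x
      obtain ⟨y1, y2, y3, y4⟩ := y
      simp only [Prod.mk.injEq] at h1 h2' ⊢
      obtain ⟨a1, a2, a3, a4⟩ := h1
      obtain ⟨b1, b2, b3, b4⟩ := h2'
      refine ⟨?_, ?_, ?_, ?_⟩ <;>
        [ (rw [← Nat.div_add_mod x1 (2 ^ m), ← Nat.div_add_mod y1 (2 ^ m), a1, b1]);
          (rw [← Nat.div_add_mod x2 (2 ^ m), ← Nat.div_add_mod y2 (2 ^ m), a2, b2]);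
          (rw [← Nat.div_add_mod x3 (2 ^ m), ← Nat.div_add_mod y3 (2 ^ m), a3, b3]);
          (rw [← Nat.div_add_mod x4 (2 ^ m), ← Nat.div_add_mod y4 (2 ^ m), a4, b4])]
  rw [Finset.card_sigma] at key
  calc (sols (m + 4)).card ≤ ∑ p ∈ sols m, ((R4 16).filter (bcond m p)).card := key
    _ ≤ ∑ _p ∈ sols m, 65535 := by
        apply Finset.sum_le_sum
        intro p hp
        rw [sols, Finset.mem_filter, mem_R4] at hp
        obtain ⟨⟨h1, h2, h3, h4⟩, -⟩ := hp
        have hcar : ∀ u v : ℕ, u < 2 ^ m → v < 2 ^ m → (u + v) / 2 ^ m ≤ 1 := by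
          intro u v hu hv
          have : u + v < 2 * 2 ^ m := by omega
          have := Nat.div_lt_iff_lt_mul hpos (x := u + v) (y := 2)
          omega
        exact bcount _ _ _ _ (hcar _ _ h2 h1) (hcar _ _ h3 h1) (hcar _ _ h4 h1)
          (hcar _ _ (Nat.xor_lt_two_pow (Nat.xor_lt_two_pow h2 h3) h4) h1)
    _ = 65535 * (sols m).card := by rw [Finset.sum_const, smul_eq_mul, mul_comm]

lemma sols_card (q : ℕ) : (sols (4 * q)).card ≤ 65535 ^ q := by
  induction q with
  | zero =>
      have : (sols 0).card ≤ (R4 (2 ^ 0)).card := Finset.card_filter_le _ _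
      rw [card_R4] at this
      simpa using this
  | succ q ih =>
      have h4 : 4 * (q + 1) = 4 * q + 4 := by ring
      rw [h4]
      calc (sols (4 * q + 4)).card ≤ 65535 * (sols (4 * q)).card := step _
        _ ≤ 65535 * 65535 ^ q := by exact Nat.mul_le_mul_left _ ih
        _ = 65535 ^ (q + 1) := by rw [pow_succ]; ring

end XorAddAux

/-- For every `A ∈ ℕ`, the number of quadruples
`(n,k,l,i) ∈ {0,…,2^A−1}⁴` with `(k+n) ⊕ (l+n) ⊕ (i+n) = (k ⊕ l ⊕ i) + n` is at most
`(2^16 − 1)^{⌊A/4⌋} · 2^12`. -/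
theorem count_xor_add_quadruples (A : ℕ) :
    ((Finset.range (2 ^ A) ×ˢ Finset.range (2 ^ A) ×ˢ
        Finset.range (2 ^ A) ×ˢ Finset.range (2 ^ A)).filter
      (fun q : ℕ × ℕ × ℕ × ℕ =>
        (q.2.1 + q.1) ^^^ (q.2.2.1 + q.1) ^^^ (q.2.2.2 + q.1)
          = (q.2.1 ^^^ q.2.2.1 ^^^ q.2.2.2) + q.1)).card
    ≤ (2 ^ 16 - 1) ^ (A / 4) * 2 ^ 12 := by
  classical
  set q := A / 4 with hq
  set r := A % 4 with hr
  have hA : A = 4 * q + r := (Nat.div_add_mod A 4).symm ▸ by omega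
  have hr3 : r ≤ 3 := by omega
  have hpos : 0 < 2 ^ (4 * q) := Nat.two_pow_pos _
  -- inject into (sols (4*q)) ×ˢ R4 (2^r)
  have key : ((Finset.range (2 ^ A) ×ˢ Finset.range (2 ^ A) ×ˢ
        Finset.range (2 ^ A) ×ˢ Finset.range (2 ^ A)).filter
      (fun x : ℕ × ℕ × ℕ × ℕ =>
        (x.2.1 + x.1) ^^^ (x.2.2.1 + x.1) ^^^ (x.2.2.2 + x.1)
          = (x.2.1 ^^^ x.2.2.1 ^^^ x.2.2.2) + x.1)).card
      ≤ ((sols (4 * q)) ×ˢ R4 (2 ^ r)).card := by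
    apply Finset.card_le_card_of_injOn (fun x => (lo (4 * q) x, hi (4 * q) x))
    · intro x hx
      rw [Finset.mem_coe, Finset.mem_filter] at hx
      obtain ⟨hmem, hc⟩ := hx
      have hxlt : x.1 < 2 ^ A ∧ x.2.1 < 2 ^ A ∧ x.2.2.1 < 2 ^ A ∧ x.2.2.2 < 2 ^ A := by
        simpa [Finset.mem_product] using hmem
      rw [Finset.mem_coe, Finset.mem_product]
      constructor
      · rw [sols, Finset.mem_filter]
        refine ⟨?_, ?_⟩
        · rw [mem_R4]
          exact ⟨Nat.mod_lt _ hpos, Nat.mod_lt _ hpos, Nat.mod_lt _ hpos, Nat.mod_lt _ hpos⟩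
        · exact qcond_lo _ _ (by rw [hc])
      · rw [mem_R4]
        have hd : ∀ y : ℕ, y < 2 ^ A → y / 2 ^ (4 * q) < 2 ^ r := by
          intro y hy
          rw [Nat.div_lt_iff_lt_mul hpos]
          calc y < 2 ^ A := hy
            _ = 2 ^ r * 2 ^ (4 * q) := by rw [← pow_add, hA]; ring_nf
        exact ⟨hd _ hxlt.1, hd _ hxlt.2.1, hd _ hxlt.2.2.1, hd _ hxlt.2.2.2⟩
    · intro x hx y hy hxy
      simp only [Prod.mk.injEq] at hxy
      obtain ⟨h1, h2'⟩ := hxy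
      unfold lo at h1
      unfold hi at h2'
      obtain ⟨x1, x2, x3, x4⟩ := x
      obtain ⟨y1, y2, y3, y4⟩ := y
      simp only [Prod.mk.injEq] at h1 h2' ⊢
      obtain ⟨a1, a2, a3, a4⟩ := h1
      obtain ⟨b1, b2, b3, b4⟩ := h2'
      refine ⟨?_, ?_, ?_, ?_⟩ <;>
        [ (rw [← Nat.div_add_mod x1 (2 ^ (4 * q)), ← Nat.div_add_mod y1 (2 ^ (4 * q)), a1, b1]);
          (rw [← Nat.div_add_mod x2 (2 ^ (4 * q)), ← Nat.div_add_mod y2 (2 ^ (4 * q)), a2, b2]);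
          (rw [← Nat.div_add_mod x3 (2 ^ (4 * q)), ← Nat.div_add_mod y3 (2 ^ (4 * q)), a3, b3]);
          (rw [← Nat.div_add_mod x4 (2 ^ (4 * q)), ← Nat.div_add_mod y4 (2 ^ (4 * q)), a4, b4])]
  rw [Finset.card_product, card_R4] at key
  calc _ ≤ (sols (4 * q)).card * (2 ^ r) ^ 4 := key
    _ ≤ 65535 ^ q * (2 ^ r) ^ 4 := Nat.mul_le_mul_right _ (sols_card q)
    _ ≤ 65535 ^ q * 2 ^ 12 := by
        apply Nat.mul_le_mul_left
        calc (2 ^ r) ^ 4 = 2 ^ (4 * r) := by rw [← pow_mul]; ring_nf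
          _ ≤ 2 ^ 12 := Nat.pow_le_pow_right (by norm_num) (by omega)
    _ = (2 ^ 16 - 1) ^ (A / 4) * 2 ^ 12 := by norm_num [hq]
end

section
/- There is an absolute constant C such that for every a ∈ ℕ, Σ_{t¹=0}^{a} Σ_{t²=t¹}^{∞} ∫_{J_{t¹}×J_{t²}} sup_{A ≥ a} sup_{n : |n|=A} (1/2^A) Σ_{s=0}^{t¹} n_s |Σ_{k=0}^{2^s−1} D_{n^{(s+1)}+k}(x¹) D_{n−(n^{(s+1)}+k)}(x²)| d(x¹,x²) ≤ C. -/
open MeasureTheory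

/-- Walsh–Dirichlet kernel `D_n = Σ_{k<n} ω_k`. -/
noncomputable def Dker (n : ℕ) (x : ℝ) : ℝ := ∑ k ∈ Finset.range n, walsh k x

/-- Triangular Fejér kernel `K△_n(x¹,x²) = (1/n) Σ_{k=1}^{n−1} D_k(x¹) D_{n−k}(x²)`. -/
noncomputable def Ktri (n : ℕ) (x1 x2 : ℝ) : ℝ :=
  (n : ℝ)⁻¹ * ∑ k ∈ Finset.Ico 1 n, Dker k x1 * Dker (n - k) x2

/-- The dyadic interval `I_a = [0, 2^{−a})`. -/
def Iset (a : ℕ) : Set ℝ := Set.Ico 0 (1 / 2 ^ a)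

/-- `J_k = I_k \ I_{k+1}`. -/
def Jset (k : ℕ) : Set ℝ := Iset k \ Iset (k + 1)

/-- Upper truncation `n^{(s)} = Σ_{j≥s} n_j 2^j`. -/
def upp (n s : ℕ) : ℕ := 2 ^ s * (n / 2 ^ s)

/-! ### Auxiliary lemmas -/

lemma abs_walsh (n : ℕ) (x : ℝ) : |walsh n x| = 1 := by
  unfold walsh; rw [abs_pow, abs_neg, abs_one, one_pow]

lemma abs_Dker_le (n : ℕ) (x : ℝ) : |Dker n x| ≤ (n : ℝ) := by
  unfold Dker
  calc |∑ k ∈ Finset.range n, walsh k x| ≤ ∑ k ∈ Finset.range n, |walsh k x| :=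
        Finset.abs_sum_le_sum_abs _ _
    _ = (n : ℝ) := by simp [abs_walsh]

lemma walsh_pad (n : ℕ) (x : ℝ) {M : ℕ} (h : n + 1 ≤ M) :
    walsh n x = (-1 : ℝ) ^ (∑ j ∈ Finset.range M, (n.testBit j).toNat * dig x j) := by
  unfold walsh
  congr 1
  refine Finset.sum_subset (Finset.range_subset_range.2 h) ?_
  intro j _ hj
  have hj' : n + 1 ≤ j := by simpa using hj
  have hn : n < 2 ^ j := lt_of_lt_of_le (Nat.lt_two_pow_self (n := n)) (Nat.pow_le_pow_right (by norm_num) (by omega))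
  rw [Nat.testBit_eq_false_of_lt hn]
  simp

lemma walsh_two_pow_mul (L i : ℕ) (hi : i < 2 ^ L) (x : ℝ) :
    walsh (2 ^ L + i) x = walsh (2 ^ L) x * walsh i x := by
  have hM1 : 2 ^ L + i + 1 ≤ 2 ^ L + i + 1 := le_rfl
  have hM2 : 2 ^ L + 1 ≤ 2 ^ L + i + 1 := by omega
  have hM3 : i + 1 ≤ 2 ^ L + i + 1 := by omega
  rw [walsh_pad (2 ^ L + i) x hM1, walsh_pad (2 ^ L) x hM2, walsh_pad i x hM3, ← pow_add]
  congr 1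
  rw [← Finset.sum_add_distrib]
  refine Finset.sum_congr rfl fun j _ => ?_
  have hbit : (((2 ^ L + i).testBit j).toNat : ℕ)
      = ((2 ^ L).testBit j).toNat + (i.testBit j).toNat := by
    rcases lt_trichotomy j L with h | h | h
    · rw [Nat.testBit_two_pow_add_gt h, Nat.testBit_two_pow_of_ne (by omega)]
      simp
    · subst h
      rw [Nat.testBit_two_pow_add_eq, Nat.testBit_eq_false_of_lt hi, Nat.testBit_two_pow_self]
      simp [Nat.testBit_eq_false_of_lt hi]
    · have h1 : 2 ^ L + i < 2 ^ j := by
        have h2 : 2 ^ (L + 1) ≤ 2 ^ j := Nat.pow_le_pow_right (by norm_num) (by omega)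
        have h3 : 2 ^ (L + 1) = 2 ^ L + 2 ^ L := by rw [pow_succ]; ring
        omega
      have h4 : i < 2 ^ j := by omega
      rw [Nat.testBit_eq_false_of_lt h1, Nat.testBit_eq_false_of_lt h4,
        Nat.testBit_two_pow_of_ne (by omega)]
      simp
  rw [hbit, add_mul]

lemma Dker_two_pow_add (L i : ℕ) (hi : i ≤ 2 ^ L) (x : ℝ) :
    Dker (2 ^ L + i) x = Dker (2 ^ L) x + walsh (2 ^ L) x * Dker i x := by
  unfold Dker
  rw [Finset.sum_range_add, Finset.mul_sum]
  congr 1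
  exact Finset.sum_congr rfl fun k hk =>
    walsh_two_pow_mul L k (lt_of_lt_of_le (Finset.mem_range.1 hk) hi) x

lemma mem_Jset_iff {t : ℕ} {x : ℝ} : x ∈ Jset t ↔ 1 / 2 ^ (t + 1) ≤ x ∧ x < 1 / 2 ^ t := by
  unfold Jset Iset
  simp only [Set.mem_diff, Set.mem_Ico, not_and, not_lt]
  constructor
  · rintro ⟨⟨h0, h1⟩, h2⟩
    exact ⟨h2 h0, h1⟩
  · rintro ⟨h1, h2⟩
    have h0 : (0 : ℝ) ≤ x := le_trans (by positivity) h1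
    exact ⟨⟨h0, h2⟩, fun _ => h1⟩

lemma dig_eq_one_of_mem {t : ℕ} {x : ℝ} (hx : x ∈ Jset t) : dig x t = 1 := by
  obtain ⟨h1, h2⟩ := mem_Jset_iff.1 hx
  have hp : (0 : ℝ) < 2 ^ (t + 1) := by positivity
  have l1 : (1 : ℝ) ≤ x * 2 ^ (t + 1) := (div_le_iff₀ hp).1 h1
  have l2 : x * 2 ^ (t + 1) < 2 := by
    have := (lt_div_iff₀ (by positivity : (0:ℝ) < 2 ^ t)).1 h2
    have e : (2:ℝ) ^ (t+1) = 2 ^ t * 2 := by rw [pow_succ]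
    nlinarith [pow_pos (show (0:ℝ) < 2 by norm_num) t]
  have hfl : ⌊x * 2 ^ (t + 1)⌋ = 1 := by
    refine Int.floor_eq_iff.mpr ⟨?_, ?_⟩ <;> push_cast <;> linarith
  unfold dig
  rw [hfl]
  rfl

lemma Dker_two_pow_eq_zero {t : ℕ} {x : ℝ} (hx : x ∈ Jset t) :
    ∀ {L : ℕ}, t < L → Dker (2 ^ L) x = 0 := by
  intro L
  induction L with
  | zero => omega
  | succ L ih =>
    intro hL
    have h3 : 2 ^ (L + 1) = 2 ^ L + 2 ^ L := by rw [pow_succ]; ring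
    have key : Dker (2 ^ (L + 1)) x = (1 + walsh (2 ^ L) x) * Dker (2 ^ L) x := by
      rw [h3, Dker_two_pow_add L (2 ^ L) le_rfl x]; ring
    rcases Nat.lt_or_ge t L with h | h
    · rw [key, ih h, mul_zero]
    · have ht : t = L := by omega
      subst ht
      have hw : walsh (2 ^ t) x = -1 := by
        have hM : 2 ^ t + 1 ≤ 2 ^ t + 1 := le_rfl
        rw [walsh_pad (2 ^ t) x hM]
        have hsum : ∑ j ∈ Finset.range (2 ^ t + 1), ((2 ^ t).testBit j).toNat * dig x j
            = dig x t := by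
          rw [Finset.sum_eq_single t]
          · rw [Nat.testBit_two_pow_self]; simp
          · intro j _ hj
            rw [Nat.testBit_two_pow_of_ne (Ne.symm hj)]; simp
          · intro h'
            exact absurd (Finset.mem_range.2 (by have := Nat.lt_two_pow_self (n := t); omega)) h'
        rw [hsum, dig_eq_one_of_mem hx, pow_one]
      rw [key, hw]
      ring

lemma abs_Dker_le_of_mem {t : ℕ} {x : ℝ} (hx : x ∈ Jset t) (m : ℕ) :
    |Dker m x| ≤ 2 ^ (t + 1) := by
  suffices H : ∀ L, ∀ m < 2 ^ L, |Dker m x| ≤ (2 : ℝ) ^ min L (t + 1) - 1 by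
    have h1 := H m m (Nat.lt_two_pow_self (n := m))
    have h2 : (2 : ℝ) ^ min m (t + 1) ≤ 2 ^ (t + 1) :=
      pow_le_pow_right₀ (by norm_num) (min_le_right _ _)
    linarith
  intro L
  induction L with
  | zero =>
    intro m hm
    interval_cases m
    simp [Dker]
  | succ L ih =>
    intro m hm
    rcases Nat.lt_or_ge m (2 ^ L) with h | h
    · refine le_trans (ih m h) ?_
      have : (2 : ℝ) ^ min L (t + 1) ≤ 2 ^ min (L + 1) (t + 1) :=
        pow_le_pow_right₀ (by norm_num) (by omega)
      linarith
    · have h3 : 2 ^ (L + 1) = 2 ^ L + 2 ^ L := by rw [pow_succ]; ring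
      have hi : m - 2 ^ L < 2 ^ L := by omega
      have hm' : m = 2 ^ L + (m - 2 ^ L) := by omega
      rw [hm', Dker_two_pow_add L _ (le_of_lt hi) x]
      rcases Nat.lt_or_ge t L with hL | hL
      · rw [Dker_two_pow_eq_zero hx hL, zero_add, abs_mul, abs_walsh, one_mul]
        have h1 := ih _ hi
        have e1 : min L (t + 1) = t + 1 := min_eq_right (by omega)
        have e2 : min (L + 1) (t + 1) = t + 1 := min_eq_right (by omega)
        rw [e1] at h1; rw [e2]; exact h1
      · have e2 : min (L + 1) (t + 1) = L + 1 := min_eq_left (by omega)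
        rw [e2]
        have b1 : |Dker (2 ^ L) x| ≤ (2 : ℝ) ^ L := by
          have := abs_Dker_le (2 ^ L) x
          push_cast at this
          exact this
        have b2 := ih _ hi
        have b3 : (2 : ℝ) ^ min L (t + 1) ≤ 2 ^ L :=
          pow_le_pow_right₀ (by norm_num) (min_le_left _ _)
        calc |Dker (2 ^ L) x + walsh (2 ^ L) x * Dker (m - 2 ^ L) x|
            ≤ |Dker (2 ^ L) x| + |walsh (2 ^ L) x * Dker (m - 2 ^ L) x| := abs_add_le _ _
          _ = |Dker (2 ^ L) x| + |Dker (m - 2 ^ L) x| := by rw [abs_mul, abs_walsh, one_mul]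
          _ ≤ 2 ^ L + (2 ^ min L (t + 1) - 1) := by linarith
          _ ≤ 2 ^ (L + 1) - 1 := by rw [pow_succ]; linarith

lemma pointwise_bound {a t1 A n : ℕ} (ht : t1 ≤ a) (hA : a ≤ A)
    {x1 x2 : ℝ} (h1 : x1 ∈ Jset t1) :
    (2 ^ A : ℝ)⁻¹ * ∑ s ∈ Finset.range (t1 + 1),
        ((n.testBit s).toNat : ℝ) *
          |∑ k ∈ Finset.range (2 ^ s),
            Dker (upp n (s + 1) + k) x1 * Dker (n - (upp n (s + 1) + k)) x2|
      ≤ 6 * 8 ^ t1 / 2 ^ a := by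
  have key : ∀ s ∈ Finset.range (t1 + 1),
      ((n.testBit s).toNat : ℝ) *
        |∑ k ∈ Finset.range (2 ^ s),
          Dker (upp n (s + 1) + k) x1 * Dker (n - (upp n (s + 1) + k)) x2|
      ≤ 2 ^ (t1 + 2) * 4 ^ s := by
    intro s _
    have hb : ((n.testBit s).toNat : ℝ) ≤ 1 := by
      rcases n.testBit s with _ | _ <;> simp
    have habs : |∑ k ∈ Finset.range (2 ^ s),
        Dker (upp n (s + 1) + k) x1 * Dker (n - (upp n (s + 1) + k)) x2|
        ≤ 2 ^ (t1 + 2) * 4 ^ s := by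
      have hterm : ∀ k ∈ Finset.range (2 ^ s),
          |Dker (upp n (s + 1) + k) x1 * Dker (n - (upp n (s + 1) + k)) x2|
          ≤ 2 ^ (t1 + 1) * 2 ^ (s + 1) := by
        intro k _
        rw [abs_mul]
        have d1 : |Dker (upp n (s + 1) + k) x1| ≤ 2 ^ (t1 + 1) := abs_Dker_le_of_mem h1 _
        have d2 : |Dker (n - (upp n (s + 1) + k)) x2| ≤ 2 ^ (s + 1) := by
          have hmod : n - (upp n (s + 1) + k) ≤ 2 ^ (s + 1) := by
            have h5 := Nat.div_add_mod n (2 ^ (s + 1))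
            have h6 : n % 2 ^ (s + 1) < 2 ^ (s + 1) := Nat.mod_lt _ (by positivity)
            unfold upp
            omega
          calc |Dker (n - (upp n (s + 1) + k)) x2| ≤ ((n - (upp n (s + 1) + k) : ℕ) : ℝ) :=
                abs_Dker_le _ _
            _ ≤ ((2 ^ (s + 1) : ℕ) : ℝ) := by exact_mod_cast hmod
            _ = 2 ^ (s + 1) := by push_cast; ring
        have hnn : (0:ℝ) ≤ |Dker (n - (upp n (s + 1) + k)) x2| := abs_nonneg _
        calc |Dker (upp n (s + 1) + k) x1| * |Dker (n - (upp n (s + 1) + k)) x2|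
            ≤ 2 ^ (t1 + 1) * |Dker (n - (upp n (s + 1) + k)) x2| := by
              apply mul_le_mul_of_nonneg_right d1 hnn
          _ ≤ 2 ^ (t1 + 1) * 2 ^ (s + 1) := by
              apply mul_le_mul_of_nonneg_left d2 (by positivity)
      calc |∑ k ∈ Finset.range (2 ^ s),
          Dker (upp n (s + 1) + k) x1 * Dker (n - (upp n (s + 1) + k)) x2|
          ≤ ∑ k ∈ Finset.range (2 ^ s),
            |Dker (upp n (s + 1) + k) x1 * Dker (n - (upp n (s + 1) + k)) x2| :=
            Finset.abs_sum_le_sum_abs _ _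
        _ ≤ ∑ _k ∈ Finset.range (2 ^ s), (2 ^ (t1 + 1) * 2 ^ (s + 1) : ℝ) :=
            Finset.sum_le_sum hterm
        _ = 2 ^ s * (2 ^ (t1 + 1) * 2 ^ (s + 1)) := by
            rw [Finset.sum_const, Finset.card_range]; push_cast; ring
        _ = 2 ^ (t1 + 2) * 4 ^ s := by
            rw [show (4:ℝ) ^ s = 2 ^ s * 2 ^ s by rw [← mul_pow]; norm_num]; ring
    calc ((n.testBit s).toNat : ℝ) * |∑ k ∈ Finset.range (2 ^ s),
          Dker (upp n (s + 1) + k) x1 * Dker (n - (upp n (s + 1) + k)) x2|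
        ≤ 1 * (2 ^ (t1 + 2) * 4 ^ s) := by
          apply mul_le_mul hb habs (abs_nonneg _) (by norm_num)
      _ = 2 ^ (t1 + 2) * 4 ^ s := one_mul _
  have hsum : ∑ s ∈ Finset.range (t1 + 1),
      ((n.testBit s).toNat : ℝ) *
        |∑ k ∈ Finset.range (2 ^ s),
          Dker (upp n (s + 1) + k) x1 * Dker (n - (upp n (s + 1) + k)) x2|
      ≤ 6 * 8 ^ t1 := by
    calc ∑ s ∈ Finset.range (t1 + 1), ((n.testBit s).toNat : ℝ) * |∑ k ∈ Finset.range (2 ^ s),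
            Dker (upp n (s + 1) + k) x1 * Dker (n - (upp n (s + 1) + k)) x2|
        ≤ ∑ s ∈ Finset.range (t1 + 1), (2 ^ (t1 + 2) * 4 ^ s : ℝ) := Finset.sum_le_sum key
      _ = 2 ^ (t1 + 2) * ∑ s ∈ Finset.range (t1 + 1), (4 : ℝ) ^ s := by rw [Finset.mul_sum]
      _ = 2 ^ (t1 + 2) * ((4 ^ (t1 + 1) - 1) / (4 - 1)) := by
          rw [geom_sum_eq (by norm_num : (4:ℝ) ≠ 1)]
      _ ≤ 6 * 8 ^ t1 := by
          have h4 : (4:ℝ) ^ (t1 + 1) = 4 * 4 ^ t1 := by ring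
          have h2 : (2:ℝ) ^ (t1 + 2) = 4 * 2 ^ t1 := by ring
          have h8 : (8:ℝ) ^ t1 = 2 ^ t1 * 4 ^ t1 := by
            rw [← mul_pow]; norm_num
          rw [h4, h2, h8]
          have hp1 : (0:ℝ) < 2 ^ t1 := by positivity
          have hp2 : (0:ℝ) < 4 ^ t1 := by positivity
          nlinarith
  have hnn : (0:ℝ) ≤ ∑ s ∈ Finset.range (t1 + 1),
      ((n.testBit s).toNat : ℝ) *
        |∑ k ∈ Finset.range (2 ^ s),
          Dker (upp n (s + 1) + k) x1 * Dker (n - (upp n (s + 1) + k)) x2| := by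
    apply Finset.sum_nonneg
    intro s _
    positivity
  have hinv : (2 ^ A : ℝ)⁻¹ ≤ (2 ^ a : ℝ)⁻¹ := by
    apply inv_anti₀ (by positivity)
    exact pow_le_pow_right₀ (by norm_num) hA
  calc (2 ^ A : ℝ)⁻¹ * ∑ s ∈ Finset.range (t1 + 1), ((n.testBit s).toNat : ℝ) *
          |∑ k ∈ Finset.range (2 ^ s),
            Dker (upp n (s + 1) + k) x1 * Dker (n - (upp n (s + 1) + k)) x2|
      ≤ (2 ^ a : ℝ)⁻¹ * (6 * 8 ^ t1) := by
        apply mul_le_mul hinv hsum hnn (by positivity)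
    _ = 6 * 8 ^ t1 / 2 ^ a := by ring

/-- Reindexing equivalence for the tail sum. -/
def tailEquiv (t : ℕ) : ℕ ≃ {m : ℕ // t ≤ m} where
  toFun i := ⟨t + i, Nat.le_add_right _ _⟩
  invFun m := m.1 - t
  left_inv i := by simp
  right_inv m := by
    ext
    simp [Nat.add_sub_cancel' m.2]

lemma volume_Jset_le (t : ℕ) : volume (Jset t) ≤ ENNReal.ofReal (1 / 2 ^ t) := by
  refine le_trans (measure_mono Set.diff_subset) ?_
  unfold Iset
  rw [Real.volume_Ico]
  exact ENNReal.ofReal_le_ofReal (by norm_num)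

/-- First part (`0 ≤ s ≤ t¹`) of the maximal triangular kernel estimate: the double sum over `t¹ ≤ a`, `t² ≥ t¹` of the integrals over `J_{t¹}×J_{t²}` is bounded by an absolute constant. -/
theorem sup_kernel_int_part1 :
    ∃ C : ℝ, 0 < C ∧ ∀ a : ℕ,
      ∑ t1 ∈ Finset.range (a + 1), ∑' t2 : {m : ℕ // t1 ≤ m},
        ∫⁻ x in Jset t1 ×ˢ Jset (t2 : ℕ),
          ⨆ (A : ℕ) (_ : a ≤ A) (n : ℕ) (_ : 2 ^ A ≤ n ∧ n < 2 ^ (A + 1)),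
            ENNReal.ofReal ((2 ^ A : ℝ)⁻¹ *
              ∑ s ∈ Finset.range (t1 + 1),
                ((n.testBit s).toNat : ℝ) *
                  |∑ k ∈ Finset.range (2 ^ s),
                    Dker (upp n (s + 1) + k) x.1 * Dker (n - (upp n (s + 1) + k)) x.2|)
      ≤ ENNReal.ofReal C := by
  refine ⟨24, by norm_num, fun a => ?_⟩
  have step1 : ∀ t1, t1 ≤ a →
      (∑' t2 : {m : ℕ // t1 ≤ m},
        ∫⁻ x in Jset t1 ×ˢ Jset (t2 : ℕ),
          ⨆ (A : ℕ) (_ : a ≤ A) (n : ℕ) (_ : 2 ^ A ≤ n ∧ n < 2 ^ (A + 1)),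
            ENNReal.ofReal ((2 ^ A : ℝ)⁻¹ *
              ∑ s ∈ Finset.range (t1 + 1),
                ((n.testBit s).toNat : ℝ) *
                  |∑ k ∈ Finset.range (2 ^ s),
                    Dker (upp n (s + 1) + k) x.1 * Dker (n - (upp n (s + 1) + k)) x.2|))
      ≤ ENNReal.ofReal (12 * 2 ^ t1 / 2 ^ a) := by
    intro t1 ht
    have hint : ∀ t2 : ℕ,
        (∫⁻ x in Jset t1 ×ˢ Jset t2,
          ⨆ (A : ℕ) (_ : a ≤ A) (n : ℕ) (_ : 2 ^ A ≤ n ∧ n < 2 ^ (A + 1)),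
            ENNReal.ofReal ((2 ^ A : ℝ)⁻¹ *
              ∑ s ∈ Finset.range (t1 + 1),
                ((n.testBit s).toNat : ℝ) *
                  |∑ k ∈ Finset.range (2 ^ s),
                    Dker (upp n (s + 1) + k) x.1 * Dker (n - (upp n (s + 1) + k)) x.2|))
        ≤ ENNReal.ofReal (6 * 8 ^ t1 / 2 ^ a) *
            (ENNReal.ofReal (1 / 2 ^ t1) * ENNReal.ofReal (1 / 2 ^ t2)) := by
      intro t2
      have hpt : ∀ x ∈ Jset t1 ×ˢ Jset t2,
          (⨆ (A : ℕ) (_ : a ≤ A) (n : ℕ) (_ : 2 ^ A ≤ n ∧ n < 2 ^ (A + 1)),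
            ENNReal.ofReal ((2 ^ A : ℝ)⁻¹ *
              ∑ s ∈ Finset.range (t1 + 1),
                ((n.testBit s).toNat : ℝ) *
                  |∑ k ∈ Finset.range (2 ^ s),
                    Dker (upp n (s + 1) + k) x.1 * Dker (n - (upp n (s + 1) + k)) x.2|))
          ≤ ENNReal.ofReal (6 * 8 ^ t1 / 2 ^ a) := by
        intro x hx
        refine iSup_le fun A => iSup_le fun hA => iSup_le fun n => iSup_le fun _ => ?_
        exact ENNReal.ofReal_le_ofReal (pointwise_bound ht hA hx.1)
      refine le_trans (setLIntegral_mono measurable_const hpt) ?_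
      rw [setLIntegral_const]
      have hμ : (volume : Measure (ℝ × ℝ)) (Jset t1 ×ˢ Jset t2)
          ≤ ENNReal.ofReal (1 / 2 ^ t1) * ENNReal.ofReal (1 / 2 ^ t2) := by
        rw [Measure.volume_eq_prod, Measure.prod_prod]
        exact mul_le_mul' (volume_Jset_le t1) (volume_Jset_le t2)
      exact mul_le_mul' le_rfl hμ
    refine le_trans (ENNReal.tsum_le_tsum fun t2 => hint (t2 : ℕ)) ?_
    rw [ENNReal.tsum_mul_left]
    have htail : (∑' t2 : {m : ℕ // t1 ≤ m}, ENNReal.ofReal (1 / 2 ^ (t2 : ℕ)))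
        = ENNReal.ofReal (1 / 2 ^ t1) * 2 := by
      have := (tailEquiv t1).tsum_eq (fun m : {m : ℕ // t1 ≤ m} => ENNReal.ofReal (1 / 2 ^ (m : ℕ)))
      rw [← this]
      have hterm : ∀ i : ℕ,
          ENNReal.ofReal (1 / 2 ^ ((tailEquiv t1 i : ℕ)))
          = ENNReal.ofReal (1 / 2 ^ t1) * (ENNReal.ofReal (1 / 2)) ^ i := by
        intro i
        have h1 : ((tailEquiv t1 i : ℕ)) = t1 + i := rfl
        rw [h1, ← ENNReal.ofReal_pow (by norm_num), ← ENNReal.ofReal_mul (by positivity)]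
        congr 1
        rw [pow_add]
        field_simp
        rw [← mul_pow]; norm_num
      calc (∑' i : ℕ, ENNReal.ofReal (1 / 2 ^ ((tailEquiv t1 i : ℕ))))
          = ∑' i : ℕ, ENNReal.ofReal (1 / 2 ^ t1) * (ENNReal.ofReal (1 / 2)) ^ i := by
            exact tsum_congr hterm
        _ = ENNReal.ofReal (1 / 2 ^ t1) * ∑' i : ℕ, (ENNReal.ofReal (1 / 2)) ^ i :=
            ENNReal.tsum_mul_left
        _ = ENNReal.ofReal (1 / 2 ^ t1) * 2 := by
            rw [ENNReal.tsum_geometric]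
            congr 1
            have h12 : ENNReal.ofReal (1 / 2 : ℝ) = 2⁻¹ := by
              rw [one_div, ENNReal.ofReal_inv_of_pos (by norm_num)]
              norm_num
            rw [h12, ENNReal.one_sub_inv_two, inv_inv]
    rw [ENNReal.tsum_mul_left, htail]
    have : ENNReal.ofReal (6 * 8 ^ t1 / 2 ^ a) *
        (ENNReal.ofReal (1 / 2 ^ t1) * (ENNReal.ofReal (1 / 2 ^ t1) * 2))
        = ENNReal.ofReal (6 * 8 ^ t1 / 2 ^ a * (1 / 2 ^ t1) * (1 / 2 ^ t1) * 2) := by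
      rw [ENNReal.ofReal_mul (by positivity), ENNReal.ofReal_mul (by positivity),
        ENNReal.ofReal_mul (by positivity)]
      have h2 : ENNReal.ofReal (2 : ℝ) = 2 := by norm_num
      rw [h2]
      ring
    rw [this]
    apply ENNReal.ofReal_le_ofReal
    have h8 : (8:ℝ) ^ t1 = 2 ^ t1 * 2 ^ t1 * 2 ^ t1 := by
      rw [← mul_pow, ← mul_pow]; norm_num
    have hp : (0:ℝ) < 2 ^ t1 := by positivity
    have hq : (0:ℝ) < 2 ^ a := by positivity
    rw [h8]
    apply le_of_eq
    field_simp
    ring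
  calc ∑ t1 ∈ Finset.range (a + 1), ∑' t2 : {m : ℕ // t1 ≤ m},
        ∫⁻ x in Jset t1 ×ˢ Jset (t2 : ℕ),
          ⨆ (A : ℕ) (_ : a ≤ A) (n : ℕ) (_ : 2 ^ A ≤ n ∧ n < 2 ^ (A + 1)),
            ENNReal.ofReal ((2 ^ A : ℝ)⁻¹ *
              ∑ s ∈ Finset.range (t1 + 1),
                ((n.testBit s).toNat : ℝ) *
                  |∑ k ∈ Finset.range (2 ^ s),
                    Dker (upp n (s + 1) + k) x.1 * Dker (n - (upp n (s + 1) + k)) x.2|)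
      ≤ ∑ t1 ∈ Finset.range (a + 1), ENNReal.ofReal (12 * 2 ^ t1 / 2 ^ a) :=
        Finset.sum_le_sum fun t1 ht1 => step1 t1 (by
          have := Finset.mem_range.1 ht1; omega)
    _ = ENNReal.ofReal (∑ t1 ∈ Finset.range (a + 1), (12 * 2 ^ t1 / 2 ^ a : ℝ)) := by
        rw [ENNReal.ofReal_sum_of_nonneg fun i _ => by positivity]
    _ ≤ ENNReal.ofReal 24 := by
        apply ENNReal.ofReal_le_ofReal
        have hsum : ∑ t1 ∈ Finset.range (a + 1), (12 * 2 ^ t1 / 2 ^ a : ℝ)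
            = 12 / 2 ^ a * ∑ t1 ∈ Finset.range (a + 1), (2:ℝ) ^ t1 := by
          rw [Finset.mul_sum]
          exact Finset.sum_congr rfl fun i _ => by ring
        rw [hsum, geom_sum_eq (by norm_num : (2:ℝ) ≠ 1)]
        have hq : (0:ℝ) < 2 ^ a := by positivity
        have h2 : (2:ℝ) ^ (a + 1) = 2 * 2 ^ a := by ring
        rw [h2]
        rw [div_mul_eq_mul_div, div_le_iff₀ hq]
        nlinarith
end
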